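/- Define g₃ : [0,1] → ℝ by g₃(z) = (−z² + 16z − 3 + √(49−z)·(1−z)^{3/2}) / (2(z+5)). Then g₃ takes values in [0,1], and for every z ∈ [0,1] it satisfies the functional equation g₃(z) = (1/4)·(1+z)·(1 + g₃(g₃(z))). -/
import Mathlib


namespace VEP

/-- The generating function `g₃` for the incomplete binary tree model with natural embedding:
`g₃(z) = (−z² + 16z − 3 + √(49−z)(1−z)^{3/2}) / (2(z+5))`. -/
noncomputable def g3 (z : ℝ) : ℝ :=
  (-z ^ 2 + 16 * z - 3 + Real.sqrt (49 - z) * (1 - z) ^ ((3 : ℝ) / 2)) / (2 * (z + 5))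

lemma g3_eq {z : ℝ} (hz0 : 0 ≤ z) (hz1 : z ≤ 1) :
    2 * (z + 5) * g3 z = (-z ^ 2 + 16 * z - 3) + (1 - z) * Real.sqrt ((49 - z) * (1 - z)) := by
  have h1z : (0:ℝ) ≤ 1 - z := by linarith
  have h49 : (0:ℝ) ≤ 49 - z := by linarith
  have hhalf : Real.sqrt (49 - z) * (1 - z) ^ ((3 : ℝ) / 2)
      = (1 - z) * Real.sqrt ((49 - z) * (1 - z)) := by
    rw [show ((3:ℝ)/2) = 1 + 1/2 by norm_num, Real.rpow_add' h1z (by norm_num),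
      Real.rpow_one, ← Real.sqrt_eq_rpow, Real.sqrt_mul h49]
    ring
  rw [g3, hhalf]
  field_simp

lemma aux_add_nonneg (a b : ℝ) (hb : 0 ≤ b) (h : a ^ 2 ≤ b ^ 2) : 0 ≤ a + b := by
  nlinarith

lemma aux_nonneg_cancel (c e : ℝ) (hc : 0 < c) (h : 0 ≤ c * e) : 0 ≤ e := by
  nlinarith

lemma aux_eq_of_sq (a b : ℝ) (ha : 0 ≤ a) (hb : 0 ≤ b) (h : a ^ 2 = b ^ 2) : a = b := by
  apply le_antisymm <;> nlinarith

lemma g3_mem {z : ℝ} (hz0 : 0 ≤ z) (hz1 : z ≤ 1) : g3 z ∈ Set.Icc (0:ℝ) 1 := by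
  have h1z : (0:ℝ) ≤ 1 - z := by linarith
  set s := Real.sqrt ((49 - z) * (1 - z)) with hsdef
  have hs0 : 0 ≤ s := Real.sqrt_nonneg _
  have hs : s ^ 2 = (49 - z) * (1 - z) :=
    Real.sq_sqrt (by nlinarith)
  have hw := g3_eq hz0 hz1
  rw [← hsdef] at hw
  have hs7 : s ≤ 7 := by nlinarith [sq_nonneg (s - 7)]
  have hslow : 7 * (1 - z) ≤ s := by
    nlinarith [mul_nonneg hz0 h1z]
  constructor
  · nlinarith [hw, mul_le_mul_of_nonneg_left hslow h1z, mul_nonneg hz0 hz0]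
  · nlinarith [hw, mul_le_mul_of_nonneg_left hs7 h1z, mul_nonneg h1z (show (0:ℝ) ≤ 6 - z by linarith)]

/-- `g₃` maps `[0,1]` into `[0,1]` and satisfies `g₃(z) = ¼(1+z)(1 + g₃(g₃(z)))` there. -/
theorem g3_functional_equation :
    (∀ z ∈ Set.Icc (0 : ℝ) 1, g3 z ∈ Set.Icc (0 : ℝ) 1) ∧
    (∀ z ∈ Set.Icc (0 : ℝ) 1, g3 z = (1 / 4) * (1 + z) * (1 + g3 (g3 z))) := by
  constructor
  · rintro z ⟨hz0, hz1⟩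
    exact g3_mem hz0 hz1
  · rintro z ⟨hz0, hz1⟩
    have h1z : (0:ℝ) ≤ 1 - z := by linarith
    set w := g3 z with hwdef
    obtain ⟨hw0, hw1⟩ := g3_mem hz0 hz1
    rw [← hwdef] at hw0 hw1
    set s := Real.sqrt ((49 - z) * (1 - z)) with hsdef
    have hs0 : 0 ≤ s := Real.sqrt_nonneg _
    have hs : s ^ 2 = (49 - z) * (1 - z) := Real.sq_sqrt (by nlinarith)
    have hw := g3_eq hz0 hz1
    rw [← hsdef, ← hwdef] at hw
    -- quadratic relation satisfied by w
    have hq : (2 * (z + 5) * w - (-z ^ 2 + 16 * z - 3)) ^ 2 = (1 - z) ^ 3 * (49 - z) := by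
      have h0 : 2 * (z + 5) * w - (-z ^ 2 + 16 * z - 3) = (1 - z) * s := by linarith
      rw [h0, mul_pow, hs]; ring
    -- key algebraic identity
    have hz5 : (z + 5) ≠ 0 := by linarith
    have key : ((9 + z) * w ^ 2 + 2 * (11 - 9 * z) * w - 7 * (1 + z)) ^ 2
        = (1 + z) ^ 2 * (1 - w) ^ 3 * (49 - w) := by
      have key' : (z + 5) * (((9 + z) * w ^ 2 + 2 * (11 - 9 * z) * w - 7 * (1 + z)) ^ 2)
          = (z + 5) * ((1 + z) ^ 2 * (1 - w) ^ 3 * (49 - w)) := by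
        linear_combination (4 * w * (w + 5)) * hq
      exact mul_left_cancel₀ hz5 key'
    -- positivity of Enum
    have hEq : 4 * (z + 5) ^ 2 * ((9 + z) * w ^ 2 + 2 * (11 - 9 * z) * w - 7 * (1 + z))
        = (-838 + 810 * z + 868 * z ^ 2 - 812 * z ^ 3 - 30 * z ^ 4 + 2 * z ^ 5)
          + (166 - 20 * z - 168 * z ^ 2 + 20 * z ^ 3 + 2 * z ^ 4) * s := by
      linear_combination ((9 + z) * (2 * (z + 5) * w + (-z ^ 2 + 16 * z - 3) + (1 - z) * s)
        + 4 * (11 - 9 * z) * (z + 5)) * hw + ((9 + z) * (1 - z) ^ 2) * hs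
    have hBnn : 0 ≤ (166 - 20 * z - 168 * z ^ 2 + 20 * z ^ 3 + 2 * z ^ 4) := by
      nlinarith [mul_nonneg (mul_nonneg h1z (show (0:ℝ) ≤ 1 + z by linarith))
        (show (0:ℝ) ≤ 83 - 10 * z - z ^ 2 by nlinarith)]
    have hDge : 0 ≤ (166 - 20 * z - 168 * z ^ 2 + 20 * z ^ 3 + 2 * z ^ 4) ^ 2 * s ^ 2
        - (-838 + 810 * z + 868 * z ^ 2 - 812 * z ^ 3 - 30 * z ^ 4 + 2 * z ^ 5) ^ 2 := by
      have hid : (166 - 20 * z - 168 * z ^ 2 + 20 * z ^ 3 + 2 * z ^ 4) ^ 2 * ((49 - z) * (1 - z))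
          - (-838 + 810 * z + 868 * z ^ 2 - 812 * z ^ 3 - 30 * z ^ 4 + 2 * z ^ 5) ^ 2
          = (1 - z) ^ 3 * (648000 + 1598400 * z + 1296000 * z ^ 2 + 390528 * z ^ 3
            + 46656 * z ^ 4 + 1728 * z ^ 5) := by ring
      rw [hs, hid]
      apply mul_nonneg (pow_nonneg h1z 3)
      positivity
    have hABs : 0 ≤ (-838 + 810 * z + 868 * z ^ 2 - 812 * z ^ 3 - 30 * z ^ 4 + 2 * z ^ 5)
        + (166 - 20 * z - 168 * z ^ 2 + 20 * z ^ 3 + 2 * z ^ 4) * s := by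
      apply aux_add_nonneg _ _ (mul_nonneg hBnn hs0)
      linarith [hDge, sq_nonneg s]
    have hEnum : 0 ≤ (9 + z) * w ^ 2 + 2 * (11 - 9 * z) * w - 7 * (1 + z) := by
      have h4 : 0 ≤ 4 * (z + 5) ^ 2 * ((9 + z) * w ^ 2 + 2 * (11 - 9 * z) * w - 7 * (1 + z)) :=
        hEq ▸ hABs
      exact aux_nonneg_cancel _ _ (by positivity) h4
    -- inner sqrt
    set t := Real.sqrt ((49 - w) * (1 - w)) with htdef
    have ht0 : 0 ≤ t := Real.sqrt_nonneg _
    have ht : t ^ 2 = (49 - w) * (1 - w) :=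
      Real.sq_sqrt (mul_nonneg (by linarith) (by linarith))
    have hw2 := g3_eq hw0 hw1
    rw [← htdef] at hw2
    have h₁ : ((1 + z) * ((1 - w) * t)) ^ 2
        = ((9 + z) * w ^ 2 + 2 * (11 - 9 * z) * w - 7 * (1 + z)) ^ 2 := by
      linear_combination ((1 + z) ^ 2 * (1 - w) ^ 2) * ht - key
    have hge : 0 ≤ (1 + z) * ((1 - w) * t) := by
      apply mul_nonneg (by linarith)
      exact mul_nonneg (by linarith) ht0
    have heq : (1 + z) * ((1 - w) * t) = (9 + z) * w ^ 2 + 2 * (11 - 9 * z) * w - 7 * (1 + z) :=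
      aux_eq_of_sq _ _ hge hEnum h₁
    have hG : (1 + z) * (2 * (w + 5)) * g3 w = 2 * (w + 5) * (4 * w - 1 - z) := by
      linear_combination (1 + z) * hw2 + heq
    have h25 : (2 * (w + 5)) ≠ 0 := by positivity
    have h3 : (1 + z) * g3 w = 4 * w - 1 - z := by
      apply mul_left_cancel₀ h25
      linear_combination hG
    linear_combination (-1/4 : ℝ) * h3

end VEP
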